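/- Let T be an essentially selfadjoint bounded operator on a real Hilbert space H, i.e., T − T* is compact. Then T is essentially real: for every C > 0 there exists δ > 0 such that ‖1 − εT²‖_e ≤ 1 + Cε for all ε ∈ (0, δ), where ‖S‖_e = inf{‖S + K‖ : K compact}. -/

import Mathlib

/-- The essential norm of a bounded operator: the distance to the compact operators. -/
noncomputable def essNorm {𝕜 X : Type*} [NontriviallyNormedField 𝕜] [NormedAddCommGroup X]
    [NormedSpace 𝕜 X] (T : X →L[𝕜] X) : ℝ :=
  sInf ((fun K : X →L[𝕜] X => ‖T + K‖) '' {K | IsCompactOperator ⇑K})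

/-- An essentially selfadjoint operator on a real Hilbert space (`T - T*` compact) is
essentially real: `‖1 - ε T²‖ₑ ≤ 1 + o(ε)` as `ε → 0⁺`. -/
theorem essentiallySelfAdjoint_essentiallyReal {H : Type*} [NormedAddCommGroup H]
    [InnerProductSpace ℝ H] [CompleteSpace H] (T : H →L[ℝ] H)
    (hT : IsCompactOperator ⇑(T - ContinuousLinearMap.adjoint T)) :
    ∀ C > (0 : ℝ), ∃ δ > (0 : ℝ), ∀ ε : ℝ, 0 < ε → ε < δ →
      essNorm (1 - ε • T ^ 2) ≤ 1 + C * ε := by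
  intro C hC
  set A : H →L[ℝ] H := (1/2 : ℝ) • (T + ContinuousLinearMap.adjoint T) with hAdef
  have hAsa : IsSelfAdjoint A := by
    have : IsSelfAdjoint (T + star T) := IsSelfAdjoint.add_star_self T
    simpa [hAdef, ContinuousLinearMap.star_eq_adjoint] using IsSelfAdjoint.smul (star_trivial (1/2 : ℝ)) this
  have hAadj : ContinuousLinearMap.adjoint A = A := hAsa
  -- T - A is compact
  have hTA : IsCompactOperator ⇑(T - A) := by
    have h : T - A = (1/2 : ℝ) • (T - ContinuousLinearMap.adjoint T) := by
      rw [hAdef]; module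
    rw [h]
    exact hT.smul _
  refine ⟨1 / (‖A‖^2 + 1), by positivity, fun ε hε hεδ => ?_⟩
  -- the compact correction term
  set K : H →L[ℝ] H := ε • (T * (T - A) + (T - A) * A) with hKdef
  have hKc : IsCompactOperator ⇑K := by
    have h1 : IsCompactOperator ⇑(T * (T - A)) :=
      hTA.continuous_comp T.continuous
    have h2 : IsCompactOperator ⇑((T - A) * A) := hTA.comp_clm A
    exact ((h1.add h2).smul ε)
  have hsum : (1 - ε • T ^ 2) + K = 1 - ε • A ^ 2 := by
    have h : T * (T - A) + (T - A) * A = T ^ 2 - A ^ 2 := by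
      rw [pow_two, pow_two]; noncomm_ring
    rw [hKdef, h, smul_sub]; abel
  have hεA : ε * ‖A‖ ^ 2 ≤ 1 := by
    have h2 : ε * (‖A‖^2 + 1) < 1 := (lt_div_iff₀ (by positivity)).mp hεδ
    nlinarith [norm_nonneg A]
  -- norm bound on 1 - ε A²
  have hnorm : ‖(1 : H →L[ℝ] H) - ε • A ^ 2‖ ≤ 1 := by
    refine ContinuousLinearMap.opNorm_le_bound _ zero_le_one fun x => ?_
    have happ : ((1 : H →L[ℝ] H) - ε • A ^ 2) x = x - ε • A (A x) := by
      simp [pow_two, ContinuousLinearMap.mul_apply]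
    rw [happ, one_mul]
    have hsq : ‖x - ε • A (A x)‖ ^ 2 ≤ ‖x‖ ^ 2 := by
      have hexp : ‖x - ε • A (A x)‖ ^ 2
          = ‖x‖ ^ 2 - 2 * inner ℝ x (ε • A (A x)) + ‖ε • A (A x)‖ ^ 2 :=
        norm_sub_sq_real x (ε • A (A x))
      have hin : inner ℝ x (ε • A (A x)) = ε * ‖A x‖ ^ 2 := by
        rw [real_inner_smul_right]
        congr 1
        have := ContinuousLinearMap.adjoint_inner_right A x (A x)
        rw [hAadj] at this
        rw [this, real_inner_self_eq_norm_sq]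
      have hAAx : ‖A (A x)‖ ≤ ‖A‖ * ‖A x‖ := A.le_opNorm _
      rw [hexp, hin, norm_smul]
      have : (‖ε • A (A x)‖ : ℝ) = |ε| * ‖A (A x)‖ := by rw [norm_smul]; simp
      have hAx := norm_nonneg (A x)
      have hAAxnn := norm_nonneg (A (A x))
      have hAn := norm_nonneg A
      rw [Real.norm_eq_abs, abs_of_pos hε]
      have h3 : ‖A (A x)‖ ^ 2 ≤ ‖A‖ ^ 2 * ‖A x‖ ^ 2 := by nlinarith
      have h4 : ε * ‖A‖ ^ 2 * (ε * ‖A x‖ ^ 2) ≤ ε * ‖A x‖ ^ 2 :=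
        by simpa using mul_le_mul_of_nonneg_right hεA (show (0:ℝ) ≤ ε * ‖A x‖ ^ 2 by positivity)
      nlinarith [mul_le_mul_of_nonneg_left h3 (mul_pos hε hε).le]
    nlinarith [norm_nonneg (x - ε • A (A x)), norm_nonneg x]
  -- conclude via sInf
  have hmem : ‖(1 - ε • T ^ 2) + K‖ ∈
      ((fun K : H →L[ℝ] H => ‖(1 - ε • T ^ 2) + K‖) '' {K | IsCompactOperator ⇑K}) :=
    ⟨K, hKc, rfl⟩
  have hbdd : BddBelow ((fun K : H →L[ℝ] H => ‖(1 - ε • T ^ 2) + K‖) ''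
      {K | IsCompactOperator ⇑K}) := ⟨0, by rintro y ⟨L, -, rfl⟩; positivity⟩
  calc essNorm (1 - ε • T ^ 2) ≤ ‖(1 - ε • T ^ 2) + K‖ := csInf_le hbdd hmem
    _ = ‖(1 : H →L[ℝ] H) - ε • A ^ 2‖ := by rw [hsum]
    _ ≤ 1 := hnorm
    _ ≤ 1 + C * ε := by nlinarith
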